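/- Let Z be a unique factorization domain containing an infinite field k, with fraction field Q. Let P_1,...,P_s ∈ Z[y] (s ≥ 2) be nonzero polynomials with no common divisor in Q[y], and assume no prime p of Z divides all of P_1(m),...,P_s(m) for m ∈ Z. Then there exists m ∈ k ⊆ Z such that P_1(m),...,P_s(m) have no common divisor in Z other than units. -/
import Mathlib


open Polynomial

theorem stmt_5 {Z : Type*} [CommRing Z] [IsDomain Z] [UniqueFactorizationMonoid Z]
    (k : Type*) [Field k] [Infinite k] [Algebra k Z]
    (s : ℕ) (hs : 2 ≤ s) (P : Fin s → Polynomial Z)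
    (hP0 : ∀ i, P i ≠ 0)
    (hcop : ∀ d : Polynomial (FractionRing Z),
      (∀ i, d ∣ (P i).map (algebraMap Z (FractionRing Z))) → IsUnit d)
    (hAV2 : ∀ p : Z, Prime p → ∃ m : Z, ∃ i, ¬ p ∣ (P i).eval m) :
    ∃ m : k, ∀ d : Z, (∀ i, d ∣ (P i).eval (algebraMap k Z m)) → IsUnit d := by
  classical
  set Q := FractionRing Z
  set f : Z →+* Q := algebraMap Z Q with hfdef
  have hf : Function.Injective f := IsFractionRing.injective Z Q
  -- Step 1: Bezout identity in Q[X]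
  have h1 : (1 : Q[X]) ∈ Ideal.span (Set.range fun i => (P i).map f) := by
    set I : Ideal Q[X] := Ideal.span (Set.range fun i => (P i).map f) with hI
    obtain ⟨g, hg⟩ := (IsPrincipalIdealRing.principal I)
    have hgd : ∀ i, g ∣ (P i).map f := by
      intro i
      have : (P i).map f ∈ I := Ideal.subset_span ⟨i, rfl⟩
      rw [hg, Ideal.submodule_span_eq, Ideal.mem_span_singleton] at this
      exact this
    have hgu : IsUnit g := hcop g hgd
    have : I = ⊤ := by
      rw [hg, Ideal.submodule_span_eq, Ideal.span_singleton_eq_top]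
      exact hgu
    rw [this]; trivial
  rw [← Ideal.submodule_span_eq, Submodule.mem_span_range_iff_exists_fun] at h1
  obtain ⟨v, hv⟩ := h1
  -- Step 2: clear denominators
  set M := nonZeroDivisors Z
  have hnorm : ∀ i, ∃ b : M, (IsLocalization.integerNormalization M (v i)).map f
      = (b : Z) • v i := fun i => IsLocalization.integerNormalization_map_to_map M (v i)
  choose b hb using hnorm
  set c : Z := ∏ i, (b i : Z) with hc
  have hc0 : c ≠ 0 := by
    rw [hc, Finset.prod_ne_zero_iff]
    exact fun i _ => nonZeroDivisors.ne_zero (b i).2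
  set w : Fin s → Polynomial Z := fun i =>
    C (∏ j ∈ Finset.univ.erase i, (b j : Z)) * IsLocalization.integerNormalization M (v i)
    with hw
  have hBez : ∑ i, w i * P i = C c := by
    apply Polynomial.map_injective f hf
    rw [Polynomial.map_sum, Polynomial.map_C]
    have : ∀ i ∈ Finset.univ, ((w i * P i).map f)
        = C (f c) * (v i * (P i).map f) := by
      intro i _
      rw [hw]
      simp only [Polynomial.map_mul, Polynomial.map_C, hb i]
      have hsm : ((b i : Z)) • v i = C (f (b i)) * v i := by
        rw [← algebraMap_smul Q ((b i : Z)) (v i), Polynomial.smul_eq_C_mul]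
      rw [hsm, ← mul_assoc, ← mul_assoc, ← Polynomial.C_mul, ← map_mul]
      have hprod : (∏ j ∈ Finset.univ.erase i, (b j : Z)) * (b i : Z) = c := by
        rw [hc, Finset.prod_erase_mul Finset.univ _ (Finset.mem_univ i)]
      rw [hprod, mul_assoc]
    rw [Finset.sum_congr rfl this, ← Finset.mul_sum]
    have hv' : ∑ i, v i * (P i).map f = 1 := by
      rw [← hv]; congr 1
    rw [hv', mul_one]
  -- Step 3: bad sets are finite
  have key : ∀ r : Z, Prime r → (Set.Finite {m : k | ∀ i, r ∣ (P i).eval (algebraMap k Z m)}) := by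
    intro r hr
    obtain ⟨m₀, i₀, h₀⟩ := hAV2 r hr
    set I : Ideal Z := Ideal.span {r} with hI
    haveI hIp : I.IsPrime := (Ideal.span_singleton_prime hr.ne_zero).mpr hr
    haveI : Nontrivial (Z ⧸ I) := Ideal.Quotient.nontrivial_iff.mpr hIp.ne_top
    set π : Z →+* Z ⧸ I := Ideal.Quotient.mk I with hπ
    have hdvd_iff : ∀ x : Z, r ∣ x ↔ π x = 0 := by
      intro x
      rw [hπ, Ideal.Quotient.eq_zero_iff_mem, hI, Ideal.mem_span_singleton]
    have hmapne : (P i₀).map π ≠ 0 := by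
      intro h
      apply h₀
      rw [hdvd_iff]
      have : ((P i₀).map π).eval (π m₀) = π ((P i₀).eval m₀) := by
        rw [Polynomial.eval_map, Polynomial.eval₂_hom]
      rw [h] at this
      simpa using this.symm
    have hroots : Set.Finite {x : Z ⧸ I | ((P i₀).map π).IsRoot x} :=
      Polynomial.finite_setOf_isRoot hmapne
    set ψ : k →+* Z ⧸ I := π.comp (algebraMap k Z) with hψ
    have hψinj : Function.Injective ψ := RingHom.injective ψ
    apply Set.Finite.subset ((hroots.preimage (Set.injOn_of_injective hψinj)))
    intro m hm
    have : r ∣ (P i₀).eval (algebraMap k Z m) := hm i₀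
    rw [hdvd_iff] at this
    show ((P i₀).map π).IsRoot (ψ m)
    rw [Polynomial.IsRoot, Polynomial.eval_map, hψ, RingHom.comp_apply, Polynomial.eval₂_hom]
    exact this
  -- Step 4: choose m avoiding all bad sets for prime factors of c
  set F := (UniqueFactorizationMonoid.factors c).toFinset with hF
  have hfin : (⋃ r ∈ F, {m : k | ∀ i, r ∣ (P i).eval (algebraMap k Z m)}).Finite := by
    apply Set.Finite.biUnion F.finite_toSet
    intro r hrF
    exact key r (UniqueFactorizationMonoid.prime_of_factor r (Multiset.mem_toFinset.mp hrF))
  obtain ⟨m, hm⟩ := hfin.infinite_compl.nonempty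
  refine ⟨m, fun d hd => ?_⟩
  by_contra hdu
  -- d divides c
  have hdc : d ∣ c := by
    have := congrArg (Polynomial.eval (algebraMap k Z m)) hBez
    rw [Polynomial.eval_finset_sum, Polynomial.eval_C] at this
    rw [← this]
    refine Finset.dvd_sum fun i _ => ?_
    rw [Polynomial.eval_mul]
    exact Dvd.dvd.mul_left (hd i) _
  have hd0 : d ≠ 0 := by
    rintro rfl
    exact hc0 (zero_dvd_iff.mp hdc)
  obtain ⟨q, hq⟩ := UniqueFactorizationMonoid.exists_mem_factors hd0 hdu
  have hqprime : Prime q := UniqueFactorizationMonoid.prime_of_factor q hq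
  have hqd : q ∣ d := UniqueFactorizationMonoid.dvd_of_mem_factors hq
  have hqc : q ∣ c := hqd.trans hdc
  obtain ⟨r, hrmem, hassoc⟩ :=
    UniqueFactorizationMonoid.exists_mem_factors_of_dvd hc0 hqprime.irreducible hqc
  have hrq : r ∣ q := hassoc.symm.dvd
  have : m ∈ ⋃ r ∈ F, {m : k | ∀ i, r ∣ (P i).eval (algebraMap k Z m)} := by
    refine Set.mem_biUnion (Multiset.mem_toFinset.mpr hrmem) ?_
    intro i
    exact hrq.trans (hqd.trans (hd i))
  exact hm this
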